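/- Let S be a self-adjoint semigroup of partial isometries containing the identity, let A1, ..., An ∈ S, and let E1, ..., E_{n-1} be orthogonal projections each commuting with every projection of the form T*T and TT* for T in the semigroup generated by S and the E_i, and satisfying: for each word W in these generators and each projection E in the commutative Boolean algebra generated, there is a projection F in that algebra with EW = WF. Then every product A1 E1 A2 E2 ⋯ E_{n-1} A_n is a partial isometry. -/

import Mathlib

open ContinuousLinearMap

variable {H : Type*} [NormedAddCommGroup H] [InnerProductSpace ℂ H] [CompleteSpace H]

def IsOrthoProj (E : H →L[ℂ] H) : Prop := IsSelfAdjoint E ∧ E * E = E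

def IsPartialIsom (A : H →L[ℂ] H) : Prop := IsOrthoProj (adjoint A * A)

/-- Let `S` be a self-adjoint semigroup of partial isometries containing the identity,
and let `B` be a commutative, multiplicatively closed family of orthogonal projections
containing all `T*T` and `TT*` for `T ∈ S`, with the intertwining property: for all
`A ∈ S` and `E ∈ B` there exist `F, F' ∈ B` with `EA = AF` and `AE = F'A`. Then the
semigroup generated by `S ∪ B` consists of partial isometries `T` with `T*T ∈ B` and
`TT* ∈ B`. -/
theorem enriched_semigroup_partial_isometries
    (S B : Set (H →L[ℂ] H))
    (hmulS : ∀ A ∈ S, ∀ A' ∈ S, A * A' ∈ S)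
    (hstarS : ∀ A ∈ S, adjoint A ∈ S)
    (hpiS : ∀ A ∈ S, IsPartialIsom A)
    (honeS : (1 : H →L[ℂ] H) ∈ S)
    (hBproj : ∀ E ∈ B, IsOrthoProj E)
    (hBmul : ∀ E ∈ B, ∀ F ∈ B, E * F ∈ B)
    (hBcomm : ∀ E ∈ B, ∀ F ∈ B, E * F = F * E)
    (hBinit : ∀ T ∈ S, adjoint T * T ∈ B)
    (hBfin : ∀ T ∈ S, T * adjoint T ∈ B)
    (hintertwine : ∀ A ∈ S, ∀ E ∈ B, ∃ F ∈ B, E * A = A * F)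
    (hintertwine' : ∀ A ∈ S, ∀ E ∈ B, ∃ F ∈ B, A * E = F * A) :
    ∀ l : List (H →L[ℂ] H), l ≠ [] → (∀ X ∈ l, X ∈ S ∪ B) →
      IsPartialIsom l.prod ∧ adjoint l.prod * l.prod ∈ B ∧
        l.prod * adjoint l.prod ∈ B := by
  have h1B : (1 : H →L[ℂ] H) ∈ B := by
    have := hBinit 1 honeS
    rwa [← ContinuousLinearMap.star_eq_adjoint, star_one] at this
  -- every product is of the form A * E with A ∈ S, E ∈ B
  have key : ∀ l : List (H →L[ℂ] H), (∀ X ∈ l, X ∈ S ∪ B) →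
      ∃ A ∈ S, ∃ E ∈ B, l.prod = A * E := by
    intro l
    induction l with
    | nil => exact fun _ => ⟨1, honeS, 1, h1B, by simp⟩
    | cons X rest ih =>
      intro hmem
      obtain ⟨A, hA, E, hE, hprod⟩ := ih (fun Y hY => hmem Y (List.mem_cons_of_mem _ hY))
      rcases hmem X List.mem_cons_self with hXS | hXB
      · exact ⟨X * A, hmulS X hXS A hA, E, hE, by
          simp [List.prod_cons, hprod, mul_assoc]⟩
      · obtain ⟨F, hF, hXF⟩ := hintertwine A hA X hXB
        refine ⟨A, hA, F * E, hBmul F hF E hE, ?_⟩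
        simp only [List.prod_cons, hprod]
        rw [← mul_assoc, hXF, mul_assoc]
  intro l _ hmem
  obtain ⟨A, hA, E, hE, hprod⟩ := key l hmem
  have hEadj : adjoint E = E := by
    rw [← ContinuousLinearMap.star_eq_adjoint]
    exact (hBproj E hE).1
  have hEE : E * E = E := (hBproj E hE).2
  have hadj : adjoint (A * E) = E * adjoint A := by
    rw [← ContinuousLinearMap.star_eq_adjoint, star_mul,
      ContinuousLinearMap.star_eq_adjoint, ContinuousLinearMap.star_eq_adjoint, hEadj]
  have hP : adjoint A * A ∈ B := hBinit A hA
  have hTT : adjoint (A * E) * (A * E) = (adjoint A * A) * E := by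
    rw [hadj]
    calc E * adjoint A * (A * E) = (E * (adjoint A * A)) * E := by simp only [mul_assoc]
      _ = ((adjoint A * A) * E) * E := by rw [hBcomm E hE _ hP]
      _ = (adjoint A * A) * E := by rw [mul_assoc, hEE]
  obtain ⟨F, hF, hAE⟩ := hintertwine' A hA E hE
  have hTTs : (A * E) * adjoint (A * E) = F * (A * adjoint A) := by
    rw [hadj]
    calc A * E * (E * adjoint A) = (A * (E * E)) * adjoint A := by simp only [mul_assoc]
      _ = (A * E) * adjoint A := by rw [hEE]
      _ = F * (A * adjoint A) := by rw [hAE, mul_assoc]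
  have h1 : adjoint l.prod * l.prod ∈ B := by
    rw [hprod, hTT]; exact hBmul _ hP _ hE
  have h2 : l.prod * adjoint l.prod ∈ B := by
    rw [hprod, hTTs]; exact hBmul _ hF _ (hBfin A hA)
  exact ⟨hBproj _ h1, h1, h2⟩
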